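/- Let α, γ be real numbers with α > 0 and γ > 0, let κ ≥ 0 and β > 0 satisfy β(α+γ) < 4, and set t̄ = κ − (α − γ)/2. If t > t̄ and p_t ∈ [0,1] is a fixed point of f_t(p) = 1/(1 + exp(β·(α − κ + t − p(α+γ)))), then p_t < 1/2. -/

import Mathlib

/-- Key analytic inequality: `exp(4u) * (1 - 2u) ≤ 1 + 2u` for `u ≥ 0`. -/
lemma qre_key_ineq (u : ℝ) (hu : 0 ≤ u) :
    Real.exp (4 * u) * (1 - 2 * u) ≤ 1 + 2 * u := by
  set F : ℝ → ℝ := fun x => (1 + 2 * x) - Real.exp (4 * x) * (1 - 2 * x) with hF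
  have hderiv : ∀ x : ℝ, HasDerivAt F (2 - 2 * Real.exp (4 * x) * (1 - 4 * x)) x := by
    intro x
    have h1 : HasDerivAt (fun x : ℝ => Real.exp (4 * x)) (4 * Real.exp (4 * x)) x := by
      have h := HasDerivAt.exp ((hasDerivAt_id x).const_mul 4)
      exact h.congr_deriv (by show Real.exp (4 * x) * (4 * 1) = 4 * Real.exp (4 * x); ring)
    have h2 : HasDerivAt (fun x : ℝ => Real.exp (4 * x) * (1 - 2 * x))
        (4 * Real.exp (4 * x) * (1 - 2 * x) + Real.exp (4 * x) * (-2)) x := by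
      have h := h1.mul (((hasDerivAt_id x).const_mul 2).const_sub 1)
      exact h.congr_deriv (by simp only [id]; ring)
    have h3 : HasDerivAt (fun x : ℝ => 1 + 2 * x) 2 x := by
      simpa using ((hasDerivAt_id x).const_mul 2).const_add 1
    have := h3.sub h2
    exact this.congr_deriv (by ring)
  have hmono : MonotoneOn F (Set.Ici (0:ℝ)) := by
    apply monotoneOn_of_deriv_nonneg (convex_Ici 0)
    · exact (Continuous.continuousOn (by
        continuity))
    · intro x hx
      exact (hderiv x).differentiableAt.differentiableWithinAt
    · intro x hx
      rw [(hderiv x).deriv]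
      have hx0 : (0:ℝ) ≤ x := le_of_lt (by simpa using hx)
      have hexp : Real.exp (4 * x) * (1 - 4 * x) ≤ 1 := by
        have h1 : 1 - 4 * x ≤ Real.exp (-(4 * x)) := by
          have := Real.add_one_le_exp (-(4 * x))
          linarith
        calc Real.exp (4 * x) * (1 - 4 * x)
            ≤ Real.exp (4 * x) * Real.exp (-(4 * x)) := by
              exact mul_le_mul_of_nonneg_left h1 (Real.exp_pos _).le
          _ = 1 := by rw [← Real.exp_add]; simp
      linarith
  have h0 : F 0 = 0 := by simp [hF]
  have := hmono (Set.self_mem_Ici) (Set.mem_Ici.mpr hu) hu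
  rw [h0] at this
  simp only [hF] at this
  linarith

/-- Above the threshold tax `t̄ = κ − (α − γ)/2`, the alternative is more
likely: any fixed point satisfies `p_t < 1/2`. -/
theorem qre_sb_above_threshold
    (α γ κ β : ℝ) (hα : 0 < α) (hγ : 0 < γ) (hκ : 0 ≤ κ) (hβ : 0 < β)
    (hcontr : β * (α + γ) < 4)
    (tbar : ℝ) (htbar : tbar = κ - (α - γ) / 2)
    (t p : ℝ) (ht : t > tbar) (hp : p ∈ Set.Icc (0:ℝ) 1)
    (hfix : 1 / (1 + Real.exp (β * (α - κ + t - p * (α + γ)))) = p) :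
    p < 1/2 := by
  by_contra hge
  push_neg at hge
  set E := Real.exp (β * (α - κ + t - p * (α + γ))) with hE
  have hEpos : 0 < E := Real.exp_pos _
  have hden : 0 < 1 + E := by linarith
  have hppos : 0 < p := by
    rw [← hfix]; positivity
  have hplt1 : p < 1 := by
    rw [← hfix]
    rw [div_lt_one hden]
    linarith
  set u := p - 1/2 with hu
  have hu0 : 0 ≤ u := by simp [hu]; linarith
  have hu12 : u < 1/2 := by simp [hu]; linarith
  -- E = (1-p)/p
  have hEval : E = (1 - p) / p := by
    have h1 : p * (1 + E) = 1 := by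
      field_simp at hfix
      linarith [hfix]
    field_simp
    nlinarith [h1]
  -- rewrite the exponent
  have harg : β * (α - κ + t - p * (α + γ)) = β * (t - tbar) + (-(β * (α + γ) * u)) := by
    rw [htbar, hu]; ring
  have hEfact : E = Real.exp (β * (t - tbar)) * Real.exp (-(β * (α + γ) * u)) := by
    rw [hE, harg, Real.exp_add]
  have h1lt : 1 < Real.exp (β * (t - tbar)) := by
    rw [Real.one_lt_exp_iff]; nlinarith
  have hexpmono : Real.exp (-(4 * u)) ≤ Real.exp (-(β * (α + γ) * u)) := by
    apply Real.exp_le_exp.mpr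
    nlinarith
  have hEgt : Real.exp (-(4 * u)) < E := by
    calc Real.exp (-(4 * u)) ≤ Real.exp (-(β * (α + γ) * u)) := hexpmono
      _ < Real.exp (β * (t - tbar)) * Real.exp (-(β * (α + γ) * u)) := by
          nlinarith [Real.exp_pos (-(β * (α + γ) * u))]
      _ = E := hEfact.symm
  -- so (1-p)/p > exp(-4u), i.e. exp(4u)(1-2u) > 1+2u, contradiction
  have hkey := qre_key_ineq u hu0
  have hEval' : E = (1 - 2 * u) / (1 + 2 * u) := by
    rw [hEval, hu]; ring_nf
  rw [hEval'] at hEgt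
  have hpos2 : 0 < 1 + 2 * u := by linarith
  have : Real.exp (-(4 * u)) * (1 + 2 * u) < 1 - 2 * u := by
    rw [lt_div_iff₀ hpos2] at hEgt
    linarith
  have hcontra : Real.exp (4 * u) * (1 - 2 * u) > 1 + 2 * u := by
    have he : Real.exp (4 * u) * Real.exp (-(4 * u)) = 1 := by
      rw [← Real.exp_add]; simp
    nlinarith [Real.exp_pos (4 * u), this]
  linarith
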